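/- For an ideal I on ω: Player I has a winning strategy in the HMM game with respect to I if and only if Player II has a winning strategy in the tallness game with respect to I. -/

import Mathlib

open Cardinal

/-- `I` is an ideal on `ω` (containing all finite sets, proper). -/
def IsIdealOmega (I : Set (Set ℕ)) : Prop :=
  (∀ A ∈ I, ∀ B ⊆ A, B ∈ I) ∧ (∀ A ∈ I, ∀ B ∈ I, A ∪ B ∈ I) ∧
  (∀ A : Set ℕ, A.Finite → A ∈ I) ∧ Set.univ ∉ I

/-- Player II wins a play of the tallness game with respect to `I`. -/
def TallIIWins (I : Set (Set ℕ)) (n : ℕ → ℕ) (i : ℕ → Bool) : Prop :=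
  {m | ∃ k, i k = true ∧ n k = m}.Infinite ∧ {m | ∃ k, i k = true ∧ n k = m} ∈ I

/-- Player II has a winning strategy in the tallness game with respect to `I`. -/
def TallIIWinStrat (I : Set (Set ℕ)) : Prop :=
  ∃ τ : List ℕ → Bool, ∀ n : ℕ → ℕ, StrictMono n →
    TallIIWins I n (fun k => τ ((List.range (k + 1)).map n))

/-- Player I has a winning strategy in the HMM game with respect to `I`:
Player I plays finite sets `F_k`, Player II must respond with `n_k ∉ F_k`;
Player I wins if `{n_k : k ∈ ω} ∈ I`. -/
def HMMIWinStrat (I : Set (Set ℕ)) : Prop :=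
  ∃ σ : List ℕ → Finset ℕ, ∀ n : ℕ → ℕ,
    (∀ k, n k ∉ σ ((List.range k).map n)) → Set.range n ∈ I

open scoped Classical

lemma prefix_mono {L : ℕ → List ℕ} (hpre : ∀ k, L k <+: L (k+1)) :
    ∀ {k k'}, k ≤ k' → L k <+: L k' := by
  intro k k' h
  induction k' with
  | zero => simp_all
  | succ m ih =>
    rcases Nat.lt_or_ge k (m+1) with h' | h'
    · exact (ih (by omega)).trans (hpre m)
    · have : k = m + 1 := by omega
      subst this; exact List.prefix_refl _

lemma getElem_agree {L : ℕ → List ℕ} (hpre : ∀ k, L k <+: L (k+1))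
    {k k' i : ℕ} (hi : i < (L k).length) (hi' : i < (L k').length) :
    (L k)[i]'hi = (L k')[i]'hi' := by
  rcases Nat.le_total k k' with h | h
  · exact (prefix_mono hpre h).getElem hi
  · exact ((prefix_mono hpre h).getElem hi').symm

lemma limit_lemma (L : ℕ → List ℕ)
    (hpre : ∀ k, L k <+: L (k+1))
    (hlen : ∀ k, k ≤ (L k).length)
    (hchain : ∀ k, (L k).Chain' (· < ·)) :
    ∃ r : ℕ → ℕ, StrictMono r ∧
      ∀ k j, j ≤ (L k).length → (List.range j).map r = (L k).take j := by
  refine ⟨fun j => (L (j+1)).getD j 0, ?_, ?_⟩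
  · apply strictMono_nat_of_lt_succ
    intro j
    have h1 : j + 1 < (L (j+2)).length := lt_of_lt_of_le (by omega) (hlen (j+2))
    have h0 : j < (L (j+1)).length := lt_of_lt_of_le (by omega) (hlen (j+1))
    have e1 : (L (j+1)).getD j 0 = (L (j+2))[j]'(by omega) := by
      rw [List.getD_eq_getElem _ _ h0]
      exact getElem_agree hpre h0 (by omega)
    have e2 : (L (j+2)).getD (j+1) 0 = (L (j+2))[j+1]'h1 :=
      List.getD_eq_getElem _ _ h1
    rw [e1, e2]
    exact List.isChain_iff_getElem.1 (hchain (j+2)) j (by omega)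
  · intro k j hj
    apply List.ext_getElem
    · simp [hj]
    · intro i hi1 hi2
      have hik : i < (L k).length := by simp at hi2; omega
      have hij : i < j := by simpa using hi1
      have hii : i < (L (i+1)).length := lt_of_lt_of_le (by omega) (hlen (i+1))
      simp only [List.getElem_map, List.getElem_range, List.getElem_take]
      rw [List.getD_eq_getElem _ _ hii]
      exact getElem_agree hpre hii hik

def GoodPos (τ : List ℕ → Bool) (t : List ℕ) : Prop :=
  t.Chain' (· < ·) ∧ ∀ m, (∀ x ∈ t, x < m) → τ (t ++ [m]) = true

lemma chain'_concat {l : List ℕ} {m : ℕ} (hc : l.Chain' (· < ·)) (h : ∀ x ∈ l, x < m) :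
    (l ++ [m]).Chain' (· < ·) := by
  show List.IsChain _ _
  rw [List.isChain_append]
  refine ⟨hc, List.isChain_singleton m, ?_⟩
  intro x hx y hy
  simp at hy; subst hy
  exact h x (List.mem_of_mem_getLast? hx)

/-- the avoiding step -/
noncomputable def avoidStep (τ : List ℕ → Bool) (t : List ℕ) : List ℕ :=
  if h : ∃ m, (∀ x ∈ t, x < m) ∧ τ (t ++ [m]) = false then t ++ [h.choose] else []

lemma existsGood {I : Set (Set ℕ)} {τ : List ℕ → Bool}
    (hτ : ∀ n : ℕ → ℕ, StrictMono n →
      TallIIWins I n (fun k => τ ((List.range (k + 1)).map n)))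
    (s : List ℕ) (hs : s.Chain' (· < ·)) : ∃ t, s <+: t ∧ GoodPos τ t := by
  by_contra hno
  push_neg at hno
  -- every chain extension admits an avoiding move
  have hstep : ∀ t, s <+: t → t.Chain' (· < ·) →
      ∃ m, (∀ x ∈ t, x < m) ∧ τ (t ++ [m]) = false := by
    intro t hpre hc
    have := hno t hpre
    rw [GoodPos] at this
    push_neg at this
    obtain ⟨m, hm, hfalse⟩ := this hc
    exact ⟨m, hm, by simpa using hfalse⟩
  set F : ℕ → List ℕ := fun k => (avoidStep τ)^[k] s with hF
  have hF0 : F 0 = s := rfl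
  have hFs : ∀ k, F (k+1) = avoidStep τ (F k) := by
    intro k; rw [hF]; simp [Function.iterate_succ_apply']
  -- invariant
  have hinv : ∀ k, (s <+: F k) ∧ (F k).Chain' (· < ·) ∧ (F k).length = s.length + k ∧
      (0 < k → τ (F k) = false) := by
    intro k
    induction k with
    | zero => exact ⟨List.prefix_refl _, hs, by simp [hF0], by omega⟩
    | succ j ih =>
      obtain ⟨hp, hc, hl, _⟩ := ih
      have hex := hstep (F j) hp hc
      rw [hFs j, avoidStep, dif_pos hex]
      obtain ⟨h1, h2⟩ := hex.choose_spec
      refine ⟨hp.trans (by simp), chain'_concat hc h1, by simp [hl]; omega, fun _ => h2⟩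
  -- build the limit run
  have hpre : ∀ k, F k <+: F (k+1) := by
    intro k
    have hex := hstep (F k) (hinv k).1 (hinv k).2.1
    rw [hFs k, avoidStep, dif_pos hex]
    simp
  have hlen : ∀ k, k ≤ (F k).length := fun k => by rw [(hinv k).2.2.1]; omega
  have hchain : ∀ k, (F k).Chain' (· < ·) := fun k => (hinv k).2.1
  obtain ⟨r, hr, hmap⟩ := limit_lemma F hpre hlen hchain
  obtain ⟨hinf, -⟩ := hτ r hr
  have hfalse : ∀ j, s.length ≤ j → τ ((List.range (j+1)).map r) = false := by
    intro j hj
    set k := j + 1 - s.length with hk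
    have hlk : (F k).length = j + 1 := by rw [(hinv k).2.2.1]; omega
    have : (List.range (j+1)).map r = F k := by
      rw [hmap k (j+1) (by omega), ← hlk, List.take_length]
    rw [this]
    exact (hinv k).2.2.2 (by omega)
  have hsub : {m | ∃ k, τ ((List.range (k + 1)).map r) = true ∧ r k = m}
      ⊆ r '' (Set.Iio s.length) := by
    rintro m ⟨j, hjt, rfl⟩
    by_cases hj : j < s.length
    · exact ⟨j, hj, rfl⟩
    · rw [hfalse j (by omega)] at hjt; simp at hjt
  exact hinf (Set.Finite.subset ((Set.finite_Iio s.length).image r) hsub)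

noncomputable def goodOf (τ : List ℕ → Bool) (s : List ℕ) : List ℕ :=
  if h : ∃ t, s <+: t ∧ GoodPos τ t then h.choose else []

lemma goodOf_spec {I : Set (Set ℕ)} {τ : List ℕ → Bool}
    (hτ : ∀ n : ℕ → ℕ, StrictMono n →
      TallIIWins I n (fun k => τ ((List.range (k + 1)).map n)))
    {s : List ℕ} (hs : s.Chain' (· < ·)) :
    s <+: goodOf τ s ∧ GoodPos τ (goodOf τ s) := by
  have h := existsGood hτ s hs
  rw [goodOf, dif_pos h]
  exact h.choose_spec

lemma mem_le_foldr_max : ∀ (l : List ℕ), ∀ x ∈ l, x ≤ l.foldr max 0 := by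
  intro l
  induction l with
  | nil => simp
  | cons a t ih =>
    intro x hx
    rcases List.mem_cons.1 hx with rfl | hx
    · simp
    · have := ih x hx
      simp; omega

theorem backward {I : Set (Set ℕ)} (hI : IsIdealOmega I) :
    TallIIWinStrat I → HMMIWinStrat I := by
  rintro ⟨τ, hτ⟩
  set T : List ℕ → List ℕ :=
    fun l => l.foldl (fun t m => goodOf τ (t ++ [m])) (goodOf τ []) with hT
  refine ⟨fun l => Finset.range ((T l).foldr max 0 + 1), ?_⟩
  intro n hn
  set hist : ℕ → List ℕ := fun k => (List.range k).map n with hhist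
  set L : ℕ → List ℕ := fun k => T (hist k) with hL
  have hL0 : L 0 = goodOf τ [] := by simp [hL, hT, hhist]
  have hLs : ∀ k, L (k+1) = goodOf τ (L k ++ [n k]) := by
    intro k
    simp only [hL, hT, hhist]
    rw [List.range_succ]
    simp
  have hbig : ∀ k, ∀ x ∈ L k, x < n k := by
    intro k x hx
    have h1 := hn k
    simp only [Finset.mem_range, not_lt] at h1
    have hx' := mem_le_foldr_max (L k) x hx
    have : T ((List.range k).map n) = L k := by rw [hL, hhist]
    rw [this] at h1
    omega
  have hgood : ∀ k, GoodPos τ (L k) := by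
    intro k
    induction k with
    | zero => rw [hL0]; exact (goodOf_spec hτ List.isChain_nil).2
    | succ j ih =>
      rw [hLs j]
      exact (goodOf_spec hτ (chain'_concat ih.1 (hbig j))).2
  have hpre1 : ∀ k, L k ++ [n k] <+: L (k+1) := by
    intro k; rw [hLs k]
    exact (goodOf_spec hτ (chain'_concat (hgood k).1 (hbig k))).1
  have hpre : ∀ k, L k <+: L (k+1) :=
    fun k => (List.prefix_append (L k) [n k]).trans (hpre1 k)
  have hlen : ∀ k, k ≤ (L k).length := by
    intro k; induction k with
    | zero => omega
    | succ j ih =>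
      have := (hpre1 j).length_le
      simp at this; omega
  obtain ⟨r, hr, hmap⟩ := limit_lemma L hpre hlen (fun k => (hgood k).1)
  obtain ⟨-, hmem⟩ := hτ r hr
  have hsub : Set.range n ⊆ {m | ∃ k, τ ((List.range (k + 1)).map r) = true ∧ r k = m} := by
    rintro m ⟨k, rfl⟩
    have hjlen : (L k).length + 1 ≤ (L (k+1)).length := by
      have := (hpre1 k).length_le; simp at this; omega
    have heq : (List.range ((L k).length+1)).map r = L k ++ [n k] := by
      rw [hmap (k+1) ((L k).length+1) hjlen]
      have hl : (L k ++ [n k]).length = (L k).length + 1 := by simp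
      rw [← hl]
      exact (List.prefix_iff_eq_take.1 (hpre1 k)).symm
    refine ⟨(L k).length, ?_, ?_⟩
    · rw [heq]; exact (hgood k).2 (n k) (hbig k)
    · calc r (L k).length
          = ((List.range ((L k).length+1)).map r)[(L k).length]'(by simp) := by simp
        _ = (L k ++ [n k])[(L k).length]'(by simp) := List.getElem_of_eq heq _
        _ = n k := by simp
  exact hI.1 _ hmem _ hsub

theorem forward {I : Set (Set ℕ)} (hI : IsIdealOmega I) :
    HMMIWinStrat I → TallIIWinStrat I := by
  rintro ⟨σ, hσ⟩
  set acc : List ℕ → List ℕ :=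
    fun l => l.foldl (fun a m => if m ∈ σ a then a else a ++ [m]) [] with hacc
  refine ⟨fun l => decide (l.getLastD 0 ∉ σ (acc l.dropLast)), ?_⟩
  intro n hn
  set hist : ℕ → List ℕ := fun k => (List.range k).map n with hhist
  have hhs : ∀ k, hist (k+1) = hist k ++ [n k] := by
    intro k; simp only [hhist]; rw [List.range_succ]; simp
  set P : ℕ → Prop := fun k => n k ∉ σ (acc (hist k)) with hP
  have haccs : ∀ k, acc (hist (k+1)) =
      if n k ∈ σ (acc (hist k)) then acc (hist k) else acc (hist k) ++ [n k] := by
    intro k; rw [hhs k]; simp [hacc]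
  have hdec : ∀ k, decide ((hist (k+1)).getLastD 0 ∉ σ ((acc (hist (k+1)).dropLast))) = true ↔ P k := by
    intro k; rw [hhs k]; simp [hP]
  have hconst : ∀ a b, a ≤ b → (∀ i, a ≤ i → i < b → ¬ P i) → acc (hist b) = acc (hist a) := by
    intro a b
    induction b with
    | zero =>
      intro hab _
      have : a = 0 := by omega
      subst this; rfl
    | succ m ih =>
      intro hab hno
      rcases Nat.lt_or_ge a (m+1) with h' | h'
      · have hm : a ≤ m := by omega
        have hnp : ¬ P m := hno m hm (by omega)
        have hmem : n m ∈ σ (acc (hist m)) := by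
          simp only [hP, Set.mem_setOf_eq, not_not] at hnp; exact hnp
        rw [haccs m, if_pos hmem]
        exact ih hm (fun i h1 h2 => hno i h1 (by omega))
      · have : a = m+1 := by omega
        subst this; rfl
  have hPinf : {k | P k}.Infinite := by
    by_contra hfin
    rw [Set.not_infinite] at hfin
    obtain ⟨K0, hK0⟩ : ∃ K0, ∀ k ∈ {k | P k}, k < K0 := by
      rcases hfin.bddAbove with ⟨b, hb⟩
      exact ⟨b+1, fun k hk => by have := hb hk; omega⟩
    have hstable : ∀ k, K0 ≤ k → acc (hist k) = acc (hist K0) := by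
      intro k hk
      exact hconst K0 k hk (fun i h1 h2 hi => by have := hK0 i hi; omega)
    set B := (σ (acc (hist K0))).sup id with hB
    set k := max K0 (B+1) with hk
    have h1 : ¬ P k := fun hp => by have := hK0 k hp; omega
    have h2 : n k ∈ σ (acc (hist K0)) := by
      rw [← hstable k (le_max_left _ _)]
      simp only [hP, Set.mem_setOf_eq, not_not] at h1; exact h1
    have h3 : n k ≤ B := Finset.le_sup (f := id) h2
    have h4 : k ≤ n k := hn.le_apply
    have h5 : B + 1 ≤ k := le_max_right _ _
    omega
  have hemem : ∀ j, P (Nat.nth P j) := fun j => Nat.nth_mem_of_infinite hPinf j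
  have hemono : StrictMono (Nat.nth P) := Nat.nth_strictMono hPinf
  have hgap : ∀ j i, Nat.nth P j < i → i < Nat.nth P (j+1) → ¬ P i := by
    intro j i h1 h2 hp
    obtain ⟨j', rfl⟩ := Nat.subset_range_nth (show i ∈ {x | P x} from hp)
    have g1 := (Nat.nth_lt_nth hPinf).1 h1
    have g2 := (Nat.nth_lt_nth hPinf).1 h2
    omega
  have hfirst : ∀ i, i < Nat.nth P 0 → ¬ P i := by
    intro i h1 hp
    obtain ⟨j', rfl⟩ := Nat.subset_range_nth (show i ∈ {x | P x} from hp)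
    have := (Nat.nth_lt_nth hPinf).1 h1
    omega
  set p : ℕ → ℕ := fun j => n (Nat.nth P j) with hp'
  have hpm : StrictMono p := hn.comp hemono
  have hA : ∀ j, acc (hist (Nat.nth P j)) = (List.range j).map p := by
    intro j
    induction j with
    | zero =>
      have h0 := hconst 0 (Nat.nth P 0) (by omega) (fun i _ h2 => hfirst i h2)
      rw [h0]; simp [hacc, hhist]
    | succ j ih =>
      have h1 : acc (hist (Nat.nth P j + 1)) = acc (hist (Nat.nth P j)) ++ [n (Nat.nth P j)] := by
        rw [haccs (Nat.nth P j), if_neg (hemem j)]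
      have h2 : acc (hist (Nat.nth P (j+1))) = acc (hist (Nat.nth P j + 1)) :=
        hconst (Nat.nth P j + 1) (Nat.nth P (j+1)) (hemono (by omega))
          (fun i hi1 hi2 => hgap j i (by omega) hi2)
      rw [h2, h1, ih, List.range_succ]
      simp [hp']
  have hplay : ∀ j, p j ∉ σ ((List.range j).map p) := by
    intro j
    rw [← hA j]
    exact hemem j
  have hrange := hσ p hplay
  have hSeq : {m | ∃ k, decide ((hist (k+1)).getLastD 0 ∉ σ ((acc (hist (k+1)).dropLast))) = true ∧ n k = m}
      = Set.range p := by
    ext m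
    simp only [Set.mem_setOf_eq, Set.mem_range]
    constructor
    · rintro ⟨k, hk, rfl⟩
      have hPk : P k := (hdec k).1 hk
      obtain ⟨j, rfl⟩ := Nat.subset_range_nth (show k ∈ {x | P x} from hPk)
      exact ⟨j, rfl⟩
    · rintro ⟨j, rfl⟩
      exact ⟨Nat.nth P j, (hdec (Nat.nth P j)).2 (hemem j), rfl⟩
  show TallIIWins I n (fun k => decide ((hist (k+1)).getLastD 0 ∉ σ ((acc (hist (k+1)).dropLast))))
  constructor
  · rw [hSeq]
    exact Set.infinite_range_of_injective hpm.injective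
  · rw [hSeq]
    exact hrange

theorem stmt15 (I : Set (Set ℕ)) (hI : IsIdealOmega I) :
    HMMIWinStrat I ↔ TallIIWinStrat I :=
  ⟨forward hI, backward hI⟩
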